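/- Let f : Ī → [0,∞) be continuous with f⁻¹({0}) = ∂I on a compact interval Ī = [a,b], f|_I FK-concave, normalized so max f = 1, and let u = log f on I. Then u is locally uniformly Lipschitz on compact subsets of I with Lipschitz bounds depending only on K and the distance to ∂I: |u'(t)| ≤ max{cot_K(t−a), cot_K(b−t)} wherever u is differentiable. Consequently, any sequence f_i of such normalized FK-concave functions on intervals Ī_i → Ī admits a subsequence converging locally uniformly on I to an FK-concave limit f_∞ : I → (0,∞). -/

import Mathlib

open Set Filter Topology

/-- `sn_K`: the solution of `v'' + Kv = 0`, `v(0) = 0`, `v'(0) = 1`. -/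
noncomputable def snK (K t : ℝ) : ℝ :=
  if 0 < K then Real.sin (Real.sqrt K * t) / Real.sqrt K
  else if K = 0 then t
  else Real.sinh (Real.sqrt (-K) * t) / Real.sqrt (-K)

/-- The derivative `sn_K'`. -/
noncomputable def csK (K t : ℝ) : ℝ :=
  if 0 < K then Real.cos (Real.sqrt K * t)
  else if K = 0 then 1
  else Real.cosh (Real.sqrt (-K) * t)

/-- The generalized cotangent `cot_K = sn_K'/sn_K`. -/
noncomputable def cotK (K t : ℝ) : ℝ := csK K t / snK K t

/-- The distortion coefficient `σ_K^(λ)(θ) = sn_K(λθ)/sn_K(θ)`. -/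
noncomputable def sigmaK (K lam θ : ℝ) : ℝ := snK K (lam * θ) / snK K θ

/-- `FK`-concavity (`f'' + Kf ≤ 0`) in the comparison sense on the interior of `[a,b]`. -/
def FKConcaveOn (K a b : ℝ) (f : ℝ → ℝ) : Prop :=
  ∀ s ∈ Set.Ioo a b, ∀ t ∈ Set.Ioo a b, s < t →
    (0 < K → t - s < Real.pi / Real.sqrt K) →
    ∀ lam ∈ Set.Icc (0:ℝ) 1,
      sigmaK K (1 - lam) (t - s) * f s + sigmaK K lam (t - s) * f t
        ≤ f ((1 - lam) * s + lam * t)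

/-- bound for `|csK|` on `[0,L]`. -/
noncomputable def CKbd (K L : ℝ) : ℝ := if K < 0 then Real.cosh (Real.sqrt (-K) * L) else 1

/-- upper bound for `snK` on `[0,L]`. -/
noncomputable def UK (K L : ℝ) : ℝ :=
  if 0 < K then 1 / Real.sqrt K else if K = 0 then L else Real.sinh (Real.sqrt (-K) * L) / Real.sqrt (-K)

lemma snK_zero (K : ℝ) : snK K 0 = 0 := by
  unfold snK; split_ifs <;> simp

lemma sqrtK_pos {K : ℝ} (h : 0 < K) : 0 < Real.sqrt K := Real.sqrt_pos.2 h
lemma sqrtnegK_pos {K : ℝ} (h : K < 0) : 0 < Real.sqrt (-K) := Real.sqrt_pos.2 (by linarith)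

lemma snK_nonneg {K x : ℝ} (hx : 0 ≤ x) (hK : 0 < K → x ≤ Real.pi / Real.sqrt K) :
    0 ≤ snK K x := by
  unfold snK
  split_ifs with h1 h2
  · have hs := sqrtK_pos h1
    apply div_nonneg _ hs.le
    apply Real.sin_nonneg_of_nonneg_of_le_pi (by positivity)
    rw [mul_comm, ← le_div_iff₀ hs]
    exact hK h1
  · exact hx
  · have hs := sqrtnegK_pos (lt_of_le_of_ne (not_lt.1 h1) h2)
    exact div_nonneg (by rw [Real.sinh_nonneg_iff]; exact mul_nonneg hs.le hx) hs.le

lemma snK_pos {K x : ℝ} (hx : 0 < x) (hK : 0 < K → x < Real.pi / Real.sqrt K) :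
    0 < snK K x := by
  unfold snK
  split_ifs with h1 h2
  · have hs := sqrtK_pos h1
    apply div_pos _ hs
    apply Real.sin_pos_of_pos_of_lt_pi (by positivity)
    rw [mul_comm, ← lt_div_iff₀ hs]
    exact hK h1
  · exact hx
  · have hs := sqrtnegK_pos (lt_of_le_of_ne (not_lt.1 h1) h2)
    exact div_pos (by rw [Real.sinh_pos_iff]; positivity) hs

lemma snK_pi {K : ℝ} (h : 0 < K) : snK K (Real.pi / Real.sqrt K) = 0 := by
  have hs := sqrtK_pos h
  unfold snK
  rw [if_pos h, mul_div_cancel₀ _ hs.ne', Real.sin_pi, zero_div]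

lemma hasDerivAt_snK (K x : ℝ) : HasDerivAt (snK K) (csK K x) x := by
  rcases lt_trichotomy 0 K with h | h | h
  · have e1 : snK K = fun t => Real.sin (Real.sqrt K * t) / Real.sqrt K :=
      funext fun t => if_pos h
    have e2 : csK K x = Real.cos (Real.sqrt K * x) := if_pos h
    rw [e1, e2]
    have hd : HasDerivAt (fun t : ℝ => Real.sin (Real.sqrt K * t))
        (Real.cos (Real.sqrt K * x) * Real.sqrt K) x := by
      simpa [Function.comp_def] using (Real.hasDerivAt_sin (Real.sqrt K * x)).comp x
        ((hasDerivAt_id x).const_mul (Real.sqrt K))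
    simpa [mul_div_assoc, mul_div_cancel_right₀ _ (sqrtK_pos h).ne'] using hd.div_const (Real.sqrt K)
  · have e1 : snK K = fun t => t := funext fun t => by
      rw [snK, if_neg (by simp [← h]), if_pos h.symm]
    have e2 : csK K x = 1 := by rw [csK, if_neg (by simp [← h]), if_pos h.symm]
    rw [e1, e2]; exact hasDerivAt_id x
  · have hn : ¬ 0 < K := by linarith
    have hz : K ≠ 0 := by linarith
    have e1 : snK K = fun t => Real.sinh (Real.sqrt (-K) * t) / Real.sqrt (-K) :=
      funext fun t => by rw [snK, if_neg hn, if_neg hz]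
    have e2 : csK K x = Real.cosh (Real.sqrt (-K) * x) := by rw [csK, if_neg hn, if_neg hz]
    rw [e1, e2]
    have hd : HasDerivAt (fun t : ℝ => Real.sinh (Real.sqrt (-K) * t))
        (Real.cosh (Real.sqrt (-K) * x) * Real.sqrt (-K)) x := by
      simpa [Function.comp_def] using (Real.hasDerivAt_sinh (Real.sqrt (-K) * x)).comp x
        ((hasDerivAt_id x).const_mul (Real.sqrt (-K)))
    simpa [mul_div_assoc, mul_div_cancel_right₀ _ (sqrtnegK_pos h).ne'] using
      hd.div_const (Real.sqrt (-K))

lemma snK_continuous (K : ℝ) : Continuous (snK K) :=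
  continuous_iff_continuousAt.2 fun x => (hasDerivAt_snK K x).continuousAt

lemma csK_abs_le {K L x : ℝ} (hx : x ∈ Icc (0:ℝ) L) : |csK K x| ≤ CKbd K L := by
  unfold csK CKbd
  rcases lt_trichotomy K 0 with h | h | h
  · have h0 := sqrtnegK_pos h
    rw [if_neg (by linarith), if_neg (by linarith), if_pos h,
      abs_of_pos (Real.cosh_pos _), Real.cosh_le_cosh,
      abs_of_nonneg (mul_nonneg h0.le hx.1), abs_of_nonneg (mul_nonneg h0.le (hx.1.trans hx.2))]
    exact mul_le_mul_of_nonneg_left hx.2 h0.le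
  · simp [h]
  · rw [if_pos h, if_neg (by linarith)]
    exact Real.abs_cos_le_one _

lemma CKbd_pos {K L : ℝ} : 0 < CKbd K L := by
  unfold CKbd; split_ifs
  · exact Real.cosh_pos _
  · norm_num

lemma CKbd_mono {K L L' : ℝ} (h0 : 0 ≤ L) (h : L ≤ L') : CKbd K L ≤ CKbd K L' := by
  unfold CKbd; split_ifs with hK
  · have h0' := sqrtnegK_pos hK
    rw [Real.cosh_le_cosh, abs_of_nonneg (mul_nonneg h0'.le h0),
      abs_of_nonneg (mul_nonneg h0'.le (h0.trans h))]
    exact mul_le_mul_of_nonneg_left h h0'.le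
  · exact le_refl 1

lemma snK_lip {K L x y : ℝ} (hx : x ∈ Icc (0:ℝ) L) (hy : y ∈ Icc (0:ℝ) L) :
    |snK K y - snK K x| ≤ CKbd K L * |y - x| := by
  have := Convex.norm_image_sub_le_of_norm_hasDerivWithin_le
    (f := snK K) (f' := csK K) (C := CKbd K L) (s := Icc (0:ℝ) L)
    (fun z _ => (hasDerivAt_snK K z).hasDerivWithinAt)
    (fun z hz => by simpa [Real.norm_eq_abs] using csK_abs_le hz)
    (convex_Icc _ _) hx hy
  simpa [Real.norm_eq_abs] using this

lemma snK_le_UK {K L x : ℝ} (hx : x ∈ Icc (0:ℝ) L) : snK K x ≤ UK K L := by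
  unfold snK UK
  rcases lt_trichotomy 0 K with h | h | h
  · rw [if_pos h, if_pos h]
    have := sqrtK_pos h
    gcongr
    exact Real.sin_le_one _
  · simp only [if_neg (show ¬0 < K by linarith), if_pos (show K = 0 from h.symm)]
    exact hx.2
  · have hs := sqrtnegK_pos h
    simp only [if_neg (show ¬0 < K by linarith), if_neg (show K ≠ 0 by linarith)]
    gcongr
    exact Real.sinh_le_sinh.2 (mul_le_mul_of_nonneg_left hx.2 hs.le)

lemma UK_pos {K L : ℝ} (hL : 0 < L) : 0 < UK K L := by
  unfold UK
  rcases lt_trichotomy 0 K with h | h | h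
  · rw [if_pos h]; positivity
  · rw [if_neg (by linarith), if_pos h.symm]; exact hL
  · have hs := sqrtnegK_pos h
    rw [if_neg (by linarith), if_neg (by linarith)]
    exact div_pos (by rw [Real.sinh_pos_iff]; positivity) hs

lemma UK_continuousL (K : ℝ) : Continuous (UK K) := by
  unfold UK
  rcases lt_trichotomy 0 K with h | h | h
  · simp only [if_pos h]; exact continuous_const
  · simp only [if_neg (show ¬0 < K by linarith), if_pos h.symm]; exact continuous_id
  · simp only [if_neg (show ¬0 < K by linarith), if_neg (show K ≠ 0 by linarith)]
    exact (Real.continuous_sinh.comp (continuous_const.mul continuous_id)).div_const _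

lemma deriv_nonpos_of_antitone {F : ℝ → ℝ} {a b t d : ℝ} (ht : t ∈ Ioo a b)
    (hF : ∀ x ∈ Ioo a b, ∀ y ∈ Ioo a b, x ≤ y → F y ≤ F x) (hd : HasDerivAt F d t) :
    d ≤ 0 := by
  have h1 : Tendsto (slope F t) (𝓝[>] t) (𝓝 d) :=
    (hasDerivAt_iff_tendsto_slope.1 hd).mono_left
      (nhdsWithin_mono _ fun y hy => ne_of_gt hy)
  have hne : (𝓝[>] t).NeBot := inferInstance
  refine le_of_tendsto h1 ?_
  have hmem : Ioo t b ∈ 𝓝[>] t := Ioo_mem_nhdsGT_of_mem ⟨le_refl t, ht.2⟩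
  filter_upwards [hmem] with y hy
  have hyI : y ∈ Ioo a b := ⟨ht.1.trans hy.1, hy.2⟩
  have hFy : F y ≤ F t := hF t ht y hyI hy.1.le
  rw [slope_def_field]
  have : y - t > 0 := by linarith [hy.1]
  exact div_nonpos_iff.2 (Or.inr ⟨by linarith, by linarith⟩)

lemma deriv_nonneg_of_monotone {F : ℝ → ℝ} {a b t d : ℝ} (ht : t ∈ Ioo a b)
    (hF : ∀ x ∈ Ioo a b, ∀ y ∈ Ioo a b, x ≤ y → F x ≤ F y) (hd : HasDerivAt F d t) :
    0 ≤ d := by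
  have := deriv_nonpos_of_antitone (F := fun s => -F s) (d := -d) ht
    (fun x hx y hy hxy => neg_le_neg (hF x hx y hy hxy)) hd.neg
  linarith

section generic
variable {K a b : ℝ} {f : ℝ → ℝ}

lemma chordL (hfpos : ∀ t ∈ Ioo a b, 0 < f t) (hFK : FKConcaveOn K a b f)
    {s t t' : ℝ} (h1 : a < s) (h2 : s < t) (h3 : t < t') (h4 : t' < b)
    (hlen : 0 < K → t' - s < Real.pi / Real.sqrt K) :
    f t' * snK K (t - s) ≤ f t * snK K (t' - s) := by
  have hss : s ∈ Ioo a b := ⟨h1, by linarith⟩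
  have htt' : t' ∈ Ioo a b := ⟨by linarith, h4⟩
  have hθ : 0 < t' - s := by linarith
  set lam := (t - s) / (t' - s) with hlam
  have hlam0 : 0 ≤ lam := by
    rw [hlam]; exact div_nonneg (by linarith) (by linarith)
  have hlam1 : lam ≤ 1 := by
    rw [hlam, div_le_one hθ]; linarith
  have key := hFK s hss t' htt' (by linarith) hlen lam ⟨hlam0, hlam1⟩
  have hne' : t' - s ≠ 0 := by linarith
  have hmid : (1 - lam) * s + lam * t' = t := by
    rw [hlam]; field_simp <;> ring
  rw [hmid] at key
  have hlamθ : lam * (t' - s) = t - s := div_mul_cancel₀ _ hne'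
  have hσ2 : sigmaK K lam (t' - s) = snK K (t - s) / snK K (t' - s) := by
    rw [sigmaK, hlamθ]
  have hsnθ : 0 < snK K (t' - s) := snK_pos hθ hlen
  have hσ1 : 0 ≤ sigmaK K (1 - lam) (t' - s) := by
    rw [sigmaK]
    apply div_nonneg _ hsnθ.le
    have h1lamθ : (1 - lam) * (t' - s) = t' - t := by
      rw [hlam]; field_simp; ring
    rw [h1lamθ]
    exact snK_nonneg (by linarith) (fun hK => by linarith [hlen hK])
  have hfs : 0 < f s := hfpos s hss
  have h5 : snK K (t - s) / snK K (t' - s) * f t' ≤ f t := by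
    nlinarith [mul_nonneg hσ1 hfs.le, hσ2 ▸ key]
  calc f t' * snK K (t - s) = snK K (t - s) / snK K (t' - s) * f t' * snK K (t' - s) := by
        field_simp
    _ ≤ f t * snK K (t' - s) := by
        exact mul_le_mul_of_nonneg_right h5 hsnθ.le

lemma chordR (hfpos : ∀ t ∈ Ioo a b, 0 < f t) (hFK : FKConcaveOn K a b f)
    {x y w : ℝ} (h1 : a < x) (h2 : x < y) (h3 : y < w) (h4 : w < b)
    (hlen : 0 < K → w - x < Real.pi / Real.sqrt K) :
    f x * snK K (w - y) ≤ f y * snK K (w - x) := by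
  have hxx : x ∈ Ioo a b := ⟨h1, by linarith⟩
  have hww : w ∈ Ioo a b := ⟨by linarith, h4⟩
  have hθ : 0 < w - x := by linarith
  set lam := (y - x) / (w - x) with hlam
  have hlam0 : 0 ≤ lam := by
    rw [hlam]; exact div_nonneg (by linarith) (by linarith)
  have hlam1 : lam ≤ 1 := by rw [hlam, div_le_one hθ]; linarith
  have key := hFK x hxx w hww (by linarith) hlen lam ⟨hlam0, hlam1⟩
  have hne' : w - x ≠ 0 := by linarith
  have hmid : (1 - lam) * x + lam * w = y := by rw [hlam]; field_simp <;> ring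
  rw [hmid] at key
  have h1lamθ : (1 - lam) * (w - x) = w - y := by rw [hlam]; field_simp; ring
  have hσ1 : sigmaK K (1 - lam) (w - x) = snK K (w - y) / snK K (w - x) := by
    rw [sigmaK, h1lamθ]
  have hsnθ : 0 < snK K (w - x) := snK_pos hθ hlen
  have hσ2 : 0 ≤ sigmaK K lam (w - x) := by
    rw [sigmaK]
    apply div_nonneg _ hsnθ.le
    have hlamθ : lam * (w - x) = y - x := div_mul_cancel₀ _ hne'
    rw [hlamθ]
    exact snK_nonneg (by linarith) (fun hK => by linarith [hlen hK])
  have hfw : 0 < f w := hfpos w hww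
  have h5 : snK K (w - y) / snK K (w - x) * f x ≤ f y := by
    nlinarith [mul_nonneg hσ2 hfw.le, hσ1 ▸ key]
  calc f x * snK K (w - y) = snK K (w - y) / snK K (w - x) * f x * snK K (w - x) := by
        field_simp
    _ ≤ f y * snK K (w - x) := mul_le_mul_of_nonneg_right h5 hsnθ.le

lemma lemA (hfc : ContinuousOn f (Icc a b))
    (hfpos : ∀ t ∈ Ioo a b, 0 < f t) (hFK : FKConcaveOn K a b f) :
    0 < K → b - a ≤ Real.pi / Real.sqrt K := by
  intro hK
  by_contra hcon
  push_neg at hcon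
  set P := Real.pi / Real.sqrt K with hP
  have hPpos : 0 < P := div_pos Real.pi_pos (sqrtK_pos hK)
  set s := a + (b - a - P) / 2 with hs
  set w := s + P with hw
  have hsa : a < s := by rw [hs]; linarith
  have hwb : w < b := by rw [hw, hs]; linarith
  set t := s + P / 2 with ht
  have hst : s < t := by rw [ht]; linarith
  have htw : t < w := by rw [hw, ht]; linarith
  have hwI : w ∈ Ioo a b := ⟨by linarith, hwb⟩
  -- limit of the chord inequality as t' → w⁻
  have hlim1 : Tendsto (fun t' => f t' * snK K (t - s)) (𝓝[Ioo t w] w)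
      (𝓝 (f w * snK K (t - s))) := by
    apply Tendsto.mul_const
    exact ((hfc w ⟨hwI.1.le, hwI.2.le⟩).mono
      (fun z hz => ⟨by linarith [hz.1, hsa, hst], by linarith [hz.2, hwb]⟩)).tendsto
  have hlim2 : Tendsto (fun t' => f t * snK K (t' - s)) (𝓝[Ioo t w] w)
      (𝓝 (f t * snK K (w - s))) := by
    apply Tendsto.const_mul
    exact (((snK_continuous K).comp (continuous_id.sub continuous_const)).tendsto w).mono_left
      nhdsWithin_le_nhds
  have hne : (𝓝[Ioo t w] w).NeBot := right_nhdsWithin_Ioo_neBot htw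
  have hineq : f w * snK K (t - s) ≤ f t * snK K (w - s) := by
    refine le_of_tendsto_of_tendsto hlim1 hlim2 ?_
    filter_upwards [self_mem_nhdsWithin] with t' ht'
    have h5 : t' - s < P := by linarith [ht'.2]
    exact chordL hfpos hFK hsa hst ht'.1 (by linarith [ht'.2, hwb]) (fun _ => h5)
  have hsnw : snK K (w - s) = 0 := by
    have he : w - s = P := by rw [hw]; ring
    rw [he, hP]; exact snK_pi hK
  have hfw : 0 < f w := hfpos w hwI
  have hsnt : 0 < snK K (t - s) := by
    apply snK_pos (by linarith)
    intro _
    rw [ht]; linarith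
  rw [hsnw, mul_zero] at hineq
  nlinarith [mul_pos hfw hsnt]

end generic

section generic2
variable {K a b : ℝ} {f : ℝ → ℝ}

lemma chordL_bd (hfpos : ∀ t ∈ Ioo a b, 0 < f t) (hFK : FKConcaveOn K a b f)
    (hlen : 0 < K → b - a ≤ Real.pi / Real.sqrt K)
    {t t' : ℝ} (h2 : a < t) (h3 : t < t') (h4 : t' < b) :
    f t' * snK K (t - a) ≤ f t * snK K (t' - a) := by
  have hne : (𝓝[Ioo a t] a).NeBot := left_nhdsWithin_Ioo_neBot h2
  have hlim1 : Tendsto (fun s => f t' * snK K (t - s)) (𝓝[Ioo a t] a)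
      (𝓝 (f t' * snK K (t - a))) :=
    (((snK_continuous K).comp (continuous_const.sub continuous_id)).tendsto a).const_mul
      (f t') |>.mono_left nhdsWithin_le_nhds
  have hlim2 : Tendsto (fun s => f t * snK K (t' - s)) (𝓝[Ioo a t] a)
      (𝓝 (f t * snK K (t' - a))) :=
    (((snK_continuous K).comp (continuous_const.sub continuous_id)).tendsto a).const_mul
      (f t) |>.mono_left nhdsWithin_le_nhds
  refine le_of_tendsto_of_tendsto hlim1 hlim2 ?_
  filter_upwards [self_mem_nhdsWithin] with s hs
  exact chordL hfpos hFK hs.1 hs.2 h3 h4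
    (fun hK => lt_of_lt_of_le (by linarith [hs.1]) (hlen hK))

lemma chordR_bd (hfpos : ∀ t ∈ Ioo a b, 0 < f t) (hFK : FKConcaveOn K a b f)
    (hlen : 0 < K → b - a ≤ Real.pi / Real.sqrt K)
    {x y : ℝ} (h1 : a < x) (h2 : x < y) (h3 : y < b) :
    f x * snK K (b - y) ≤ f y * snK K (b - x) := by
  have hne : (𝓝[Ioo y b] b).NeBot := right_nhdsWithin_Ioo_neBot h3
  have hlim1 : Tendsto (fun w => f x * snK K (w - y)) (𝓝[Ioo y b] b)
      (𝓝 (f x * snK K (b - y))) :=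
    (((snK_continuous K).comp (continuous_id.sub continuous_const)).tendsto b).const_mul
      (f x) |>.mono_left nhdsWithin_le_nhds
  have hlim2 : Tendsto (fun w => f y * snK K (w - x)) (𝓝[Ioo y b] b)
      (𝓝 (f y * snK K (b - x))) :=
    (((snK_continuous K).comp (continuous_id.sub continuous_const)).tendsto b).const_mul
      (f y) |>.mono_left nhdsWithin_le_nhds
  refine le_of_tendsto_of_tendsto hlim1 hlim2 ?_
  filter_upwards [self_mem_nhdsWithin] with w hw
  exact chordR hfpos hFK h1 h2 hw.1 hw.2
    (fun hK => lt_of_lt_of_le (by linarith [hw.2]) (hlen hK))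

lemma lowerBound (hab : a < b) (hfpos : ∀ t ∈ Ioo a b, 0 < f t)
    (hf0 : f a = 0 ∧ f b = 0) (hmax : ∃ x ∈ Icc a b, f x = 1)
    (hFK : FKConcaveOn K a b f) (hlen : 0 < K → b - a ≤ Real.pi / Real.sqrt K)
    {t : ℝ} (ht : t ∈ Ioo a b) :
    min (snK K (t - a)) (snK K (b - t)) / UK K (b - a) ≤ f t := by
  obtain ⟨x, hx, hx1⟩ := hmax
  have hxa : a < x := lt_of_le_of_ne hx.1 (fun h => by rw [← h, hf0.1] at hx1; norm_num at hx1)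
  have hxb : x < b := lt_of_le_of_ne hx.2 (fun h => by rw [h, hf0.2] at hx1; norm_num at hx1)
  have hU : 0 < UK K (b - a) := UK_pos (by linarith)
  have hlt : ∀ z, 0 < z - a → z < b → 0 < snK K (z - a) :=
    fun z hz hz' => snK_pos hz (fun hK => lt_of_lt_of_le (by linarith) (hlen hK))
  rcases lt_trichotomy x t with h | h | h
  · -- x < t : use chordR_bd
    have key := chordR_bd hfpos hFK hlen hxa h ht.2
    rw [hx1, one_mul] at key
    have hle : snK K (b - x) ≤ UK K (b - a) :=
      snK_le_UK ⟨by linarith, by linarith⟩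
    have hpos : 0 ≤ f t := (hfpos t ht).le
    calc min (snK K (t - a)) (snK K (b - t)) / UK K (b - a)
        ≤ snK K (b - t) / UK K (b - a) := by gcongr; exact min_le_right _ _
      _ ≤ f t := by
          rw [div_le_iff₀ hU]
          calc snK K (b - t) ≤ f t * snK K (b - x) := key
            _ ≤ f t * UK K (b - a) := by gcongr
  · -- x = t
    have hft : f t = 1 := by rw [← h]; exact hx1
    have hle : snK K (t - a) ≤ UK K (b - a) :=
      snK_le_UK ⟨by linarith [ht.1], by linarith [ht.2]⟩
    rw [hft, div_le_one hU]
    exact (min_le_left _ _).trans hle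
  · -- t < x : use chordL_bd
    have key := chordL_bd hfpos hFK hlen ht.1 h hxb
    rw [hx1, one_mul] at key
    have hle : snK K (x - a) ≤ UK K (b - a) := snK_le_UK ⟨by linarith, by linarith⟩
    have hpos : 0 ≤ f t := (hfpos t ht).le
    calc min (snK K (t - a)) (snK K (b - t)) / UK K (b - a)
        ≤ snK K (t - a) / UK K (b - a) := by gcongr; exact min_le_left _ _
      _ ≤ f t := by
          rw [div_le_iff₀ hU]
          calc snK K (t - a) ≤ f t * snK K (x - a) := key
            _ ≤ f t * UK K (b - a) := by gcongr

lemma lipBound (hab : a < b) (hfpos : ∀ t ∈ Ioo a b, 0 < f t)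
    (hle1 : ∀ t ∈ Icc a b, f t ≤ 1) (hFK : FKConcaveOn K a b f)
    (hlen : 0 < K → b - a ≤ Real.pi / Real.sqrt K)
    {x y : ℝ} (h1 : a < x) (h2 : x < y) (h3 : y < b) :
    |f y - f x| ≤ CKbd K (b - a) * (y - x) / min (snK K (x - a)) (snK K (b - y)) := by
  have hxI : x ∈ Ioo a b := ⟨h1, by linarith⟩
  have hyI : y ∈ Ioo a b := ⟨by linarith, h3⟩
  have hsnxa : 0 < snK K (x - a) :=
    snK_pos (by linarith) (fun hK => lt_of_lt_of_le (by linarith) (hlen hK))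
  have hsnby : 0 < snK K (b - y) :=
    snK_pos (by linarith) (fun hK => lt_of_lt_of_le (by linarith) (hlen hK))
  have hmin : 0 < min (snK K (x - a)) (snK K (b - y)) := lt_min hsnxa hsnby
  have hC : 0 < CKbd K (b - a) := CKbd_pos
  have hfx01 : 0 ≤ f x ∧ f x ≤ 1 := ⟨(hfpos x hxI).le, hle1 x ⟨h1.le, hxI.2.le⟩⟩
  have hfy01 : 0 ≤ f y ∧ f y ≤ 1 := ⟨(hfpos y hyI).le, hle1 y ⟨hyI.1.le, h3.le⟩⟩
  have hlip1 : |snK K (y - a) - snK K (x - a)| ≤ CKbd K (b - a) * (y - x) := by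
    have h := snK_lip (K := K) (L := b - a) (x := x - a) (y := y - a)
      ⟨by linarith, by linarith⟩ ⟨by linarith, by linarith⟩
    rwa [show y - a - (x - a) = y - x by ring,
      abs_of_pos (show (0:ℝ) < y - x by linarith)] at h
  have hlip2 : |snK K (b - x) - snK K (b - y)| ≤ CKbd K (b - a) * (y - x) := by
    have h := snK_lip (K := K) (L := b - a) (x := b - y) (y := b - x)
      ⟨by linarith, by linarith⟩ ⟨by linarith, by linarith⟩
    rwa [show b - x - (b - y) = y - x by ring,
      abs_of_pos (show (0:ℝ) < y - x by linarith)] at h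
  -- upper: f y - f x
  have key1 := chordL_bd hfpos hFK hlen h1 h2 h3
  have hup : f y - f x ≤ CKbd K (b - a) * (y - x) / snK K (x - a) := by
    rw [le_div_iff₀ hsnxa]
    have e1 : (f y - f x) * snK K (x - a) = f y * snK K (x - a) - f x * snK K (x - a) := by ring
    rw [e1]
    calc f y * snK K (x - a) - f x * snK K (x - a)
        ≤ f x * snK K (y - a) - f x * snK K (x - a) := by linarith [key1]
      _ = f x * (snK K (y - a) - snK K (x - a)) := by ring
      _ ≤ |snK K (y - a) - snK K (x - a)| := by
          rcases le_or_gt 0 (snK K (y - a) - snK K (x - a)) with hd | hd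
          · calc f x * (snK K (y - a) - snK K (x - a)) ≤ 1 * (snK K (y - a) - snK K (x - a)) :=
                mul_le_mul_of_nonneg_right hfx01.2 hd
              _ = snK K (y - a) - snK K (x - a) := one_mul _
              _ ≤ |snK K (y - a) - snK K (x - a)| := le_abs_self _
          · calc f x * (snK K (y - a) - snK K (x - a)) ≤ 0 :=
                mul_nonpos_of_nonneg_of_nonpos hfx01.1 hd.le
              _ ≤ |snK K (y - a) - snK K (x - a)| := abs_nonneg _
      _ ≤ CKbd K (b - a) * (y - x) := hlip1
  have key2 := chordR_bd hfpos hFK hlen h1 h2 h3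
  have hdn : f x - f y ≤ CKbd K (b - a) * (y - x) / snK K (b - y) := by
    rw [le_div_iff₀ hsnby]
    have e1 : (f x - f y) * snK K (b - y) = f x * snK K (b - y) - f y * snK K (b - y) := by ring
    rw [e1]
    calc f x * snK K (b - y) - f y * snK K (b - y)
        ≤ f y * snK K (b - x) - f y * snK K (b - y) := by linarith [key2]
      _ = f y * (snK K (b - x) - snK K (b - y)) := by ring
      _ ≤ |snK K (b - x) - snK K (b - y)| := by
          rcases le_or_gt 0 (snK K (b - x) - snK K (b - y)) with hd | hd
          · calc f y * (snK K (b - x) - snK K (b - y)) ≤ 1 * (snK K (b - x) - snK K (b - y)) :=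
                mul_le_mul_of_nonneg_right hfy01.2 hd
              _ = _ := one_mul _
              _ ≤ |snK K (b - x) - snK K (b - y)| := le_abs_self _
          · calc f y * (snK K (b - x) - snK K (b - y)) ≤ 0 :=
                mul_nonpos_of_nonneg_of_nonpos hfy01.1 hd.le
              _ ≤ |snK K (b - x) - snK K (b - y)| := abs_nonneg _
      _ ≤ CKbd K (b - a) * (y - x) := hlip2
  rw [abs_sub_le_iff]
  constructor
  · refine hup.trans ?_
    exact div_le_div_of_nonneg_left (mul_nonneg hC.le (by linarith)) hmin (min_le_left _ _)
  · refine hdn.trans ?_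
    exact div_le_div_of_nonneg_left (mul_nonneg hC.le (by linarith)) hmin (min_le_right _ _)

end generic2

section generic3
variable {K a b : ℝ} {f : ℝ → ℝ}

lemma gradBound (hab : a < b) (hfpos : ∀ t ∈ Ioo a b, 0 < f t)
    (hFK : FKConcaveOn K a b f) (hlen : 0 < K → b - a ≤ Real.pi / Real.sqrt K)
    {t : ℝ} (ht : t ∈ Ioo a b)
    (hdiff : DifferentiableAt ℝ (fun s => Real.log (f s)) t) :
    |deriv (fun s => Real.log (f s)) t| ≤ max (cotK K (t - a)) (cotK K (b - t)) := by
  set u := fun s => Real.log (f s) with hu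
  have hposa : 0 < snK K (t - a) :=
    snK_pos (by linarith [ht.1]) (fun hK => lt_of_lt_of_le (by linarith [ht.2]) (hlen hK))
  have hposb : 0 < snK K (b - t) :=
    snK_pos (by linarith [ht.2]) (fun hK => lt_of_lt_of_le (by linarith [ht.1]) (hlen hK))
  have hud : HasDerivAt u (deriv u t) t := hdiff.hasDerivAt
  -- derivative of s ↦ log (snK K (s - a))
  have hg1 : HasDerivAt (fun s => Real.log (snK K (s - a))) (cotK K (t - a)) t := by
    have h1 : HasDerivAt (fun s : ℝ => snK K (s - a)) (csK K (t - a)) t := by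
      simpa [Function.comp_def] using (hasDerivAt_snK K (t - a)).comp t ((hasDerivAt_id t).sub_const a)
    simpa [cotK] using h1.log hposa.ne'
  have hg2 : HasDerivAt (fun s => Real.log (snK K (b - s))) (-cotK K (b - t)) t := by
    have h1 : HasDerivAt (fun s : ℝ => snK K (b - s)) (-csK K (b - t)) t := by
      simpa [Function.comp_def] using (hasDerivAt_snK K (b - t)).comp t ((hasDerivAt_const t b).sub (hasDerivAt_id t))
    have := h1.log hposb.ne'
    simpa [cotK, neg_div] using this
  -- F1 antitone
  have hF1 : ∀ x ∈ Ioo a b, ∀ y ∈ Ioo a b, x ≤ y →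
      u y - Real.log (snK K (y - a)) ≤ u x - Real.log (snK K (x - a)) := by
    intro x hx y hy hxy
    rcases eq_or_lt_of_le hxy with rfl | hlt
    · exact le_refl _
    have key := chordL_bd hfpos hFK hlen hx.1 hlt hy.2
    have hfx := hfpos x hx
    have hfy := hfpos y hy
    have hsx : 0 < snK K (x - a) :=
      snK_pos (by linarith [hx.1]) (fun hK => lt_of_lt_of_le (by linarith [hx.2]) (hlen hK))
    have hsy : 0 < snK K (y - a) :=
      snK_pos (by linarith [hy.1]) (fun hK => lt_of_lt_of_le (by linarith [hy.2]) (hlen hK))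
    have hlog := Real.log_le_log (by positivity) key
    rw [Real.log_mul hfy.ne' hsx.ne', Real.log_mul hfx.ne' hsy.ne'] at hlog
    simp only [hu]
    linarith
  -- F2 monotone
  have hF2 : ∀ x ∈ Ioo a b, ∀ y ∈ Ioo a b, x ≤ y →
      u x - Real.log (snK K (b - x)) ≤ u y - Real.log (snK K (b - y)) := by
    intro x hx y hy hxy
    rcases eq_or_lt_of_le hxy with rfl | hlt
    · exact le_refl _
    have key := chordR_bd hfpos hFK hlen hx.1 hlt hy.2
    have hfx := hfpos x hx
    have hfy := hfpos y hy
    have hsx : 0 < snK K (b - x) :=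
      snK_pos (by linarith [hx.2]) (fun hK => lt_of_lt_of_le (by linarith [hx.1]) (hlen hK))
    have hsy : 0 < snK K (b - y) :=
      snK_pos (by linarith [hy.2]) (fun hK => lt_of_lt_of_le (by linarith [hy.1]) (hlen hK))
    have hlog := Real.log_le_log (by positivity) key
    rw [Real.log_mul hfx.ne' hsy.ne', Real.log_mul hfy.ne' hsx.ne'] at hlog
    simp only [hu]
    linarith
  have hd1 : deriv u t - cotK K (t - a) ≤ 0 :=
    deriv_nonpos_of_antitone ht hF1 (hud.sub hg1)
  have hd2 : 0 ≤ deriv u t + cotK K (b - t) := by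
    have := deriv_nonneg_of_monotone ht hF2 (hud.sub hg2)
    linarith
  rcases le_or_gt 0 (deriv u t) with h | h
  · rw [abs_of_nonneg h]
    exact le_max_of_le_left (by linarith)
  · rw [abs_of_neg h]
    exact le_max_of_le_right (by linarith)

end generic3

lemma clamp_lip (p r : ℝ) : |max 0 (min 1 p) - max 0 (min 1 r)| ≤ |p - r| := by
  calc |max 0 (min 1 p) - max 0 (min 1 r)|
      = |min 1 p ⊔ 0 - min 1 r ⊔ 0| := by rw [max_comm (0:ℝ) _, max_comm (0:ℝ) _]
    _ ≤ |min 1 p - min 1 r| := abs_max_sub_max_le_abs _ _ _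
    _ ≤ max |(1:ℝ) - 1| |p - r| := abs_min_sub_min_le_max _ _ _ _
    _ = |p - r| := by simp

/-- A continuous, normalized (`max f = 1`) `FK`-concave function `f : [a,b] → [0,∞)`
vanishing exactly on the boundary has `u = log f` locally Lipschitz on the interior,
with `|u'(t)| ≤ max{cot_K(t−a), cot_K(b−t)}` wherever `u` is differentiable; and every
sequence of such functions on intervals `[aᵢ,bᵢ] → [a,b]` has a subsequence converging
locally uniformly on `(a,b)` to an `FK`-concave positive limit. -/
theorem stmt_19 (K a b : ℝ) (hab : a < b) (f : ℝ → ℝ)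
    (hfc : ContinuousOn f (Icc a b)) (hf0 : f a = 0 ∧ f b = 0)
    (hfpos : ∀ t ∈ Ioo a b, 0 < f t)
    (hfnorm : (∀ t ∈ Icc a b, f t ≤ 1) ∧ ∃ t ∈ Icc a b, f t = 1)
    (hFK : FKConcaveOn K a b f)
    (as bs : ℕ → ℝ) (habs : ∀ i, as i < bs i)
    (ha : Tendsto as atTop (𝓝 a)) (hb : Tendsto bs atTop (𝓝 b))
    (fs : ℕ → ℝ → ℝ)
    (hfsc : ∀ i, ContinuousOn (fs i) (Icc (as i) (bs i)))
    (hfs0 : ∀ i, fs i (as i) = 0 ∧ fs i (bs i) = 0)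
    (hfspos : ∀ i, ∀ t ∈ Ioo (as i) (bs i), 0 < fs i t)
    (hfsnorm : ∀ i, (∀ t ∈ Icc (as i) (bs i), fs i t ≤ 1) ∧
      ∃ t ∈ Icc (as i) (bs i), fs i t = 1)
    (hFKs : ∀ i, FKConcaveOn K (as i) (bs i) (fs i)) :
    (∀ t ∈ Ioo a b, DifferentiableAt ℝ (fun s => Real.log (f s)) t →
      |deriv (fun s => Real.log (f s)) t| ≤ max (cotK K (t - a)) (cotK K (b - t))) ∧
    ∃ φ : ℕ → ℕ, StrictMono φ ∧ ∃ fL : ℝ → ℝ,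
      (∀ t ∈ Ioo a b, 0 < fL t) ∧ FKConcaveOn K a b fL ∧
      ∀ J : Set ℝ, IsCompact J → J ⊆ Ioo a b →
        TendstoUniformlyOn (fun i => fs (φ i)) fL atTop J := by
  have hlen : 0 < K → b - a ≤ Real.pi / Real.sqrt K := lemA hfc hfpos hFK
  have hlens : ∀ i, 0 < K → bs i - as i ≤ Real.pi / Real.sqrt K :=
    fun i => lemA (hfsc i) (hfspos i) (hFKs i)
  refine ⟨fun t ht hdiff => gradBound hab hfpos hFK hlen ht hdiff, ?_⟩
  -- clamped functions
  set g : ℕ → ℝ → ℝ := fun i t => max 0 (min 1 (fs i t)) with hgdef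
  have hg01 : ∀ i t, g i t ∈ Icc (0:ℝ) 1 := by
    intro i t
    exact ⟨le_max_left _ _, max_le (by norm_num) (min_le_left _ _)⟩
  have hfs01 : ∀ i, ∀ t ∈ Icc (as i) (bs i), 0 ≤ fs i t := by
    intro i t ht
    rcases eq_or_lt_of_le ht.1 with h | h
    · rw [← h]; exact le_of_eq (hfs0 i).1.symm
    rcases eq_or_lt_of_le ht.2 with h' | h'
    · rw [h']; exact le_of_eq (hfs0 i).2.symm
    exact (hfspos i t ⟨h, h'⟩).le
  have hgeq : ∀ i, ∀ t ∈ Icc (as i) (bs i), g i t = fs i t := by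
    intro i t ht
    rw [hgdef]
    simp only
    rw [min_eq_right ((hfsnorm i).1 t ht), max_eq_right (hfs01 i t ht)]
  have hglip : ∀ i x y, |g i x - g i y| ≤ |fs i x - fs i y| := by
    intro i x y
    exact clamp_lip _ _
  -- rational enumeration
  set q : ℕ → ℝ := fun n => (((Denumerable.eqv ℚ).symm n : ℚ) : ℝ) with hqdef
  have hqdense : ∀ x y : ℝ, x < y → ∃ n, x < q n ∧ q n < y := by
    intro x y hxy
    obtain ⟨r, h1, h2⟩ := exists_rat_btwn hxy
    refine ⟨(Denumerable.eqv ℚ) r, ?_⟩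
    have he : q ((Denumerable.eqv ℚ) r) = (r : ℝ) := by
      show (((Denumerable.eqv ℚ).symm ((Denumerable.eqv ℚ) r) : ℚ) : ℝ) = (r : ℝ)
      rw [Equiv.symm_apply_apply]
    rw [he]
    exact ⟨h1, h2⟩
  -- subsequence extraction via compactness of ℕ → Icc 0 1
  set G : ℕ → (ℕ → Icc (0:ℝ) 1) := fun i n => ⟨g i (q n), hg01 _ _⟩ with hGdef
  obtain ⟨Glim, φ, hφ, hGconv⟩ := CompactSpace.tendsto_subseq G
  have hqconv : ∀ n, Tendsto (fun i => g (φ i) (q n)) atTop (𝓝 (Glim n : ℝ)) := by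
    intro n
    have h1 := tendsto_pi_nhds.1 hGconv n
    exact (continuous_subtype_val.tendsto _).comp h1
  have hasφ : Tendsto (fun i => as (φ i)) atTop (𝓝 a) := ha.comp hφ.tendsto_atTop
  have hbsφ : Tendsto (fun i => bs (φ i)) atTop (𝓝 b) := hb.comp hφ.tendsto_atTop
  -- eventual uniform Lipschitz bounds on compact subintervals
  have hEL : ∀ c d : ℝ, a < c → c ≤ d → d < b → ∃ C : ℝ, 0 < C ∧
      ∀ᶠ i in atTop, (Icc c d ⊆ Ioo (as i) (bs i)) ∧
        ∀ x ∈ Icc c d, ∀ y ∈ Icc c d, |fs i x - fs i y| ≤ C * |x - y| := by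
    intro c d hac hcd hdb
    set δ'' : ℝ := min (min ((c - a) / 2) ((b - d) / 2)) 1 with hδ''
    have hδ''pos : 0 < δ'' := by
      rw [hδ'']
      exact lt_min (lt_min (by linarith) (by linarith)) (by norm_num)
    have hδ''ca : δ'' ≤ (c - a) / 2 := (min_le_left _ _).trans (min_le_left _ _)
    have hδ''bd : δ'' ≤ (b - d) / 2 := (min_le_left _ _).trans (min_le_right _ _)
    set δ' : ℝ := δ'' / 2 with hδ'
    have hδ'pos : 0 < δ' := by rw [hδ']; linarith
    set lo : ℝ := δ'' with hlo
    set hi : ℝ := max (d - a) (b - c) + δ' with hhi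
    have hlohi : lo ≤ hi := by
      rw [hlo, hhi]
      have : (c - a) / 2 ≤ d - a := by linarith
      linarith [le_max_left (d - a) (b - c), hδ''ca]
    have hhilt : hi < b - a := by
      rw [hhi]
      rcases max_cases (d - a) (b - c) with ⟨he, _⟩ | ⟨he, _⟩ <;> rw [he]
      · linarith
      · linarith
    obtain ⟨z, hz, hzmin⟩ := isCompact_Icc.exists_isMinOn (nonempty_Icc.2 hlohi)
      (snK_continuous K).continuousOn
    set m : ℝ := snK K z with hm
    have hmpos : 0 < m := by
      rw [hm]
      apply snK_pos (by rw [hlo] at hz; linarith [hz.1])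
      intro hK
      calc z ≤ hi := hz.2
        _ < b - a := hhilt
        _ ≤ Real.pi / Real.sqrt K := hlen hK
    refine ⟨CKbd K (b - a + 1) / m, div_pos CKbd_pos hmpos, ?_⟩
    have hev1 : ∀ᶠ i in atTop, as i ∈ Ioo (a - δ') (a + δ') :=
      ha.eventually (Ioo_mem_nhds (by linarith) (by linarith))
    have hev2 : ∀ᶠ i in atTop, bs i ∈ Ioo (b - δ') (b + δ') :=
      hb.eventually (Ioo_mem_nhds (by linarith) (by linarith))
    filter_upwards [hev1, hev2] with i h1 h2
    have has1 : as i < c := by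
      have : δ' < c - a := by rw [hδ']; linarith
      linarith [h1.2]
    have hbs1 : d < bs i := by
      have : δ' < b - d := by rw [hδ']; linarith
      linarith [h2.1]
    have hsub : Icc c d ⊆ Ioo (as i) (bs i) := fun x hx =>
      ⟨lt_of_lt_of_le has1 hx.1, lt_of_le_of_lt hx.2 hbs1⟩
    refine ⟨hsub, ?_⟩
    have hkey : ∀ x ∈ Icc c d, ∀ y ∈ Icc c d, x < y →
        |fs i y - fs i x| ≤ CKbd K (b - a + 1) / m * |x - y| := by
      intro x hx y hy hxy
      have hxI := hsub hx
      have hyI := hsub hy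
      have hlip := lipBound (habs i) (hfspos i) ((hfsnorm i).1) (hFKs i) (hlens i)
        hxI.1 hxy hyI.2
      have e1 : δ' = δ'' / 2 := hδ'
      have e2 : lo = δ'' := hlo
      have e3 : hi = max (d - a) (b - c) + δ' := hhi
      have hxlo : lo ≤ x - as i := by
        have := h1.2
        have := hx.1
        linarith [hδ''ca, hδ''pos]
      have hxhi : x - as i ≤ hi := by
        have := h1.1
        have := hx.2
        linarith [le_max_left (d - a) (b - c)]
      have hylo : lo ≤ bs i - y := by
        have := h2.1
        have := hy.2
        linarith [hδ''bd, hδ''pos]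
      have hyhi : bs i - y ≤ hi := by
        have := h2.2
        have := hy.1
        linarith [le_max_right (d - a) (b - c)]
      have hmx : m ≤ snK K (x - as i) := hzmin ⟨hxlo, hxhi⟩
      have hmy : m ≤ snK K (bs i - y) := hzmin ⟨hylo, hyhi⟩
      have hmmin : m ≤ min (snK K (x - as i)) (snK K (bs i - y)) := le_min hmx hmy
      have hCmono : CKbd K (bs i - as i) ≤ CKbd K (b - a + 1) := by
        apply CKbd_mono (by linarith [habs i])
        have := h1.1
        have := h2.2
        have h4 : δ'' ≤ 1 := min_le_right _ _
        linarith
      calc |fs i y - fs i x|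
          ≤ CKbd K (bs i - as i) * (y - x) / min (snK K (x - as i)) (snK K (bs i - y)) := hlip
        _ ≤ CKbd K (b - a + 1) * (y - x) / m := by
            apply div_le_div₀ (mul_nonneg CKbd_pos.le (by linarith))
              (mul_le_mul_of_nonneg_right hCmono (by linarith)) hmpos hmmin
        _ = CKbd K (b - a + 1) / m * |x - y| := by
            rw [abs_of_neg (show x - y < 0 by linarith)]
            field_simp <;> ring
    intro x hx y hy
    rcases lt_trichotomy x y with h | h | h
    · rw [abs_sub_comm]
      exact hkey x hx y hy h
    · simp only [h, sub_self, abs_zero, mul_zero, le_refl]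
    · rw [abs_sub_comm x y]
      exact hkey y hy x hx h
  -- pointwise convergence on (a, b)
  have hptconv : ∀ t ∈ Ioo a b, ∃ L, Tendsto (fun i => g (φ i) t) atTop (𝓝 L) := by
    intro t ht
    apply cauchySeq_tendsto_of_complete
    rw [Metric.cauchySeq_iff]
    intro ε hε
    set c : ℝ := (a + t) / 2 with hc
    set d : ℝ := (t + b) / 2 with hd
    have hac : a < c := by rw [hc]; linarith [ht.1]
    have hct : c < t := by rw [hc]; linarith [ht.1]
    have htd : t < d := by rw [hd]; linarith [ht.2]
    have hdb : d < b := by rw [hd]; linarith [ht.2]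
    obtain ⟨C, hC, hev⟩ := hEL c d hac (by linarith) hdb
    have hevφ : ∀ᶠ i in atTop, (Icc c d ⊆ Ioo (as (φ i)) (bs (φ i))) ∧
        ∀ x ∈ Icc c d, ∀ y ∈ Icc c d, |fs (φ i) x - fs (φ i) y| ≤ C * |x - y| :=
      hφ.tendsto_atTop.eventually hev
    have h6C : (0:ℝ) < ε / (6 * C) := div_pos hε (by linarith)
    obtain ⟨n, hr1, hr2⟩ := hqdense (max c (t - ε / (6 * C))) t
      (max_lt hct (by linarith))
    have hrc : c ≤ q n := le_of_lt (lt_of_le_of_lt (le_max_left _ _) hr1)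
    have hrclose : t - q n < ε / (6 * C) := by
      have := lt_of_le_of_lt (le_max_right c (t - ε / (6 * C))) hr1
      linarith
    have hrIcc : q n ∈ Icc c d := ⟨hrc, by linarith⟩
    have htIcc : t ∈ Icc c d := ⟨by linarith, by linarith⟩
    obtain ⟨N1, hN1⟩ := Metric.cauchySeq_iff.1 (hqconv n).cauchySeq (ε / 3) (by linarith)
    obtain ⟨N0, hN0⟩ := eventually_atTop.1 hevφ
    refine ⟨max N0 N1, fun i hi j hj => ?_⟩
    have hi0 := le_trans (le_max_left N0 N1) hi
    have hj0 := le_trans (le_max_left N0 N1) hj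
    have hi1 := le_trans (le_max_right N0 N1) hi
    have hj1 := le_trans (le_max_right N0 N1) hj
    have hlipt : ∀ k, N0 ≤ k → dist (g (φ k) t) (g (φ k) (q n)) ≤ ε / 6 := by
      intro k hk
      rw [Real.dist_eq]
      calc |g (φ k) t - g (φ k) (q n)| ≤ |fs (φ k) t - fs (φ k) (q n)| := hglip _ _ _
        _ ≤ C * |t - q n| := (hN0 k hk).2 t htIcc (q n) hrIcc
        _ ≤ ε / 6 := by
            rw [abs_of_pos (by linarith : (0:ℝ) < t - q n)]
            calc C * (t - q n) ≤ C * (ε / (6 * C)) :=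
                mul_le_mul_of_nonneg_left hrclose.le hC.le
              _ = ε / 6 := by field_simp
    calc dist (g (φ i) t) (g (φ j) t)
        ≤ dist (g (φ i) t) (g (φ i) (q n)) + dist (g (φ i) (q n)) (g (φ j) (q n))
          + dist (g (φ j) (q n)) (g (φ j) t) := dist_triangle4 _ _ _ _
      _ < ε / 6 + ε / 3 + ε / 6 := by
          have h1 := hlipt i hi0
          have h2 := hN1 i hi1 j hj1
          have h3 := hlipt j hj0
          rw [dist_comm] at h3
          linarith
      _ ≤ ε := by linarith
  -- the limit function
  set fL : ℝ → ℝ := fun t => limUnder atTop (fun i => g (φ i) t) with hfLdef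
  have h_fL : ∀ t ∈ Ioo a b, Tendsto (fun i => g (φ i) t) atTop (𝓝 (fL t)) := by
    intro t ht
    obtain ⟨L, hL⟩ := hptconv t ht
    rw [hfLdef]
    simp only
    rw [hL.limUnder_eq]
    exact hL
  -- eventually t is inside the i-th interval
  have hIoo_ev : ∀ t, a < t → t < b → ∀ᶠ i in atTop, t ∈ Ioo (as (φ i)) (bs (φ i)) := by
    intro t h1 h2
    have e1 : ∀ᶠ i in atTop, as (φ i) < t := hasφ.eventually (eventually_lt_nhds h1)
    have e2 : ∀ᶠ i in atTop, t < bs (φ i) := hbsφ.eventually (eventually_gt_nhds h2)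
    filter_upwards [e1, e2] with i hi1 hi2
    exact ⟨hi1, hi2⟩
  have hgfs : ∀ t, a < t → t < b → ∀ᶠ i in atTop, g (φ i) t = fs (φ i) t := by
    intro t h1 h2
    filter_upwards [hIoo_ev t h1 h2] with i hi
    exact hgeq _ t ⟨hi.1.le, hi.2.le⟩
  -- positivity of the limit
  have hpos : ∀ t ∈ Ioo a b, 0 < fL t := by
    intro t ht
    set β : ℕ → ℝ := fun i =>
      min (snK K (t - as (φ i))) (snK K (bs (φ i) - t)) / UK K (bs (φ i) - as (φ i)) with hβdef
    have hβlim : Tendsto β atTop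
        (𝓝 (min (snK K (t - a)) (snK K (b - t)) / UK K (b - a))) := by
      apply Tendsto.div
      · exact Tendsto.min
          (((snK_continuous K).tendsto _).comp (tendsto_const_nhds.sub hasφ))
          (((snK_continuous K).tendsto _).comp (hbsφ.sub tendsto_const_nhds))
      · exact ((UK_continuousL K).tendsto _).comp (hbsφ.sub hasφ)
      · exact (UK_pos (by linarith)).ne'
    have hev : ∀ᶠ i in atTop, β i ≤ g (φ i) t := by
      filter_upwards [hIoo_ev t ht.1 ht.2] with i hi
      rw [hgeq _ t ⟨hi.1.le, hi.2.le⟩]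
      exact lowerBound (habs _) (hfspos _) (hfs0 _) (hfsnorm _).2 (hFKs _) (hlens _) hi
    have hle := le_of_tendsto_of_tendsto hβlim (h_fL t ht) hev
    have h1 : 0 < min (snK K (t - a)) (snK K (b - t)) / UK K (b - a) := by
      apply div_pos _ (UK_pos (by linarith))
      apply lt_min
      · exact snK_pos (by linarith [ht.1])
          (fun hK => lt_of_lt_of_le (by linarith [ht.2]) (hlen hK))
      · exact snK_pos (by linarith [ht.2])
          (fun hK => lt_of_lt_of_le (by linarith [ht.1]) (hlen hK))
    linarith
  -- FK-concavity of the limit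
  have hconc : FKConcaveOn K a b fL := by
    intro s hs t ht hst hcond lam hlam
    have hp : (1 - lam) * s + lam * t ∈ Ioo a b := by
      constructor
      · nlinarith [hs.1, ht.1, hlam.1, hlam.2]
      · nlinarith [hs.2, ht.2, hlam.1, hlam.2]
    have hev : ∀ᶠ i in atTop,
        sigmaK K (1 - lam) (t - s) * g (φ i) s + sigmaK K lam (t - s) * g (φ i) t
          ≤ g (φ i) ((1 - lam) * s + lam * t) := by
      filter_upwards [hIoo_ev s hs.1 hs.2, hIoo_ev t ht.1 ht.2,
        hIoo_ev _ hp.1 hp.2] with i hi1 hi2 hi3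
      rw [hgeq _ s ⟨hi1.1.le, hi1.2.le⟩, hgeq _ t ⟨hi2.1.le, hi2.2.le⟩,
        hgeq _ _ ⟨hi3.1.le, hi3.2.le⟩]
      exact hFKs (φ i) s hi1 t hi2 hst hcond lam hlam
    exact le_of_tendsto_of_tendsto
      (((h_fL s hs).const_mul _).add ((h_fL t ht).const_mul _))
      (h_fL _ hp) hev
  -- local uniform convergence
  refine ⟨φ, hφ, fL, hpos, hconc, ?_⟩
  intro J hJc hJsub
  rcases J.eq_empty_or_nonempty with rfl | hne
  · intro u hu
    filter_upwards with i x hx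
    exact absurd hx (notMem_empty x)
  set c : ℝ := sInf J with hcdef
  set d : ℝ := sSup J with hddef
  have hcJ : c ∈ J := hJc.sInf_mem hne
  have hdJ : d ∈ J := hJc.sSup_mem hne
  have hsubIcc : J ⊆ Icc c d := fun x hx =>
    ⟨csInf_le hJc.bddBelow hx, le_csSup hJc.bddAbove hx⟩
  have hac : a < c := (hJsub hcJ).1
  have hdb : d < b := (hJsub hdJ).2
  have hcd : c ≤ d := (hsubIcc hcJ).2
  have hIccIoo : Icc c d ⊆ Ioo a b := fun x hx => ⟨lt_of_lt_of_le hac hx.1, lt_of_le_of_lt hx.2 hdb⟩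
  obtain ⟨C, hC, hev⟩ := hEL c d hac hcd hdb
  have hevφ : ∀ᶠ i in atTop, (Icc c d ⊆ Ioo (as (φ i)) (bs (φ i))) ∧
      ∀ x ∈ Icc c d, ∀ y ∈ Icc c d, |fs (φ i) x - fs (φ i) y| ≤ C * |x - y| :=
    hφ.tendsto_atTop.eventually hev
  -- the limit is Lipschitz too
  have hfLlip : ∀ x ∈ Icc c d, ∀ y ∈ Icc c d, |fL x - fL y| ≤ C * |x - y| := by
    intro x hx y hy
    have hx' := hIccIoo hx
    have hy' := hIccIoo hy
    have hlim : Tendsto (fun i => |g (φ i) x - g (φ i) y|) atTop (𝓝 |fL x - fL y|) :=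
      ((h_fL x hx').sub (h_fL y hy')).abs
    refine le_of_tendsto hlim ?_
    filter_upwards [hevφ] with i hi
    exact (hglip _ _ _).trans (hi.2 x hx y hy)
  rw [Metric.tendstoUniformlyOn_iff]
  intro ε hε
  set δ : ℝ := ε / (3 * (C + 1)) with hδdef
  have hδpos : 0 < δ := by
    rw [hδdef]; positivity
  have hCδ : C * δ < ε / 3 := by
    have h1 : (0:ℝ) < 3 * (C + 1) := by linarith
    rw [hδdef, mul_div_assoc', div_lt_div_iff₀ h1 (by norm_num : (0:ℝ) < 3)]
    nlinarith
  obtain ⟨T, hTsub, hTcov⟩ := hJc.elim_nhds_subcover (fun x => Metric.ball x δ)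
    (fun x _ => Metric.ball_mem_nhds x hδpos)
  have hballs : ∀ x ∈ T, ∀ᶠ i in atTop, dist (g (φ i) x) (fL x) < ε / 3 := by
    intro x hxT
    have hx' := hIccIoo (hsubIcc (hTsub x hxT))
    exact (Metric.tendsto_nhds.mp (h_fL x hx')) (ε / 3) (by linarith)
  have hballs' : ∀ᶠ i in atTop, ∀ x ∈ T, dist (g (φ i) x) (fL x) < ε / 3 :=
    (Filter.eventually_all_finset T).2 hballs
  filter_upwards [hevφ, hballs'] with i hi hball
  intro x hxJ
  have hxIcc := hsubIcc hxJ
  obtain ⟨x0, hx0T, hx0mem⟩ := mem_iUnion₂.1 (hTcov hxJ)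
  have hx0Icc : x0 ∈ Icc c d := hsubIcc (hTsub x0 hx0T)
  have hx0dist : dist x x0 < δ := Metric.mem_ball.1 hx0mem
  have hgx : g (φ i) x = fs (φ i) x := by
    have := hi.1 hxIcc
    exact hgeq _ x ⟨this.1.le, this.2.le⟩
  have hd1 : dist (fL x) (fL x0) < ε / 3 := by
    have h1 : dist (fL x) (fL x0) ≤ C * dist x x0 := by
      rw [Real.dist_eq, Real.dist_eq]
      exact hfLlip x hxIcc x0 hx0Icc
    calc dist (fL x) (fL x0) ≤ C * dist x x0 := h1
      _ ≤ C * δ := mul_le_mul_of_nonneg_left hx0dist.le hC.le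
      _ < ε / 3 := hCδ
  have hd3 : dist (g (φ i) x0) (g (φ i) x) < ε / 3 := by
    have h1 : dist (g (φ i) x0) (g (φ i) x) ≤ C * dist x x0 := by
      rw [Real.dist_eq]
      calc |g (φ i) x0 - g (φ i) x| ≤ |fs (φ i) x0 - fs (φ i) x| := hglip _ _ _
        _ ≤ C * |x0 - x| := hi.2 x0 hx0Icc x hxIcc
        _ = C * dist x x0 := by rw [Real.dist_eq, abs_sub_comm]
    calc dist (g (φ i) x0) (g (φ i) x) ≤ C * dist x x0 := h1
      _ ≤ C * δ := mul_le_mul_of_nonneg_left hx0dist.le hC.le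
      _ < ε / 3 := hCδ
  have hd2 : dist (fL x0) (g (φ i) x0) < ε / 3 := by
    rw [dist_comm]
    exact hball x0 hx0T
  calc dist (fL x) (fs (φ i) x) = dist (fL x) (g (φ i) x) := by rw [hgx]
    _ ≤ dist (fL x) (fL x0) + dist (fL x0) (g (φ i) x0) + dist (g (φ i) x0) (g (φ i) x) :=
        dist_triangle4 _ _ _ _
    _ < ε / 3 + ε / 3 + ε / 3 := by linarith
    _ = ε := by ring
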